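/- If a language L (the set of finite subwords of a bi-infinite sequence space) is finitely balanced for the letter a_i — i.e., there is a constant C such that for all n, M_i(n) - m_i(n) < C, where m_i(n) and M_i(n) are the minimum and maximum number of occurrences of a_i in words of length n in L — then the letter a_i has a well-defined frequency: there exists f_i ∈ ℝ such that for all n, n·f_i - C ≤ m_i(n) ≤ M_i(n) ≤ n·f_i + C. -/
import Mathlib


/-- If the language of a subshift is finitely balanced for the letter `a`
(there is `C` with `M a n - m a n < C` for all `n`), then the letter `a`
has a well-defined frequency `f` with `n*f - C ≤ m n ≤ M n ≤ n*f + C`. -/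
theorem stmt0 {A : Type*} [Fintype A] [DecidableEq A] (L : Set (List A))
    (hfac : ∀ u v : List A, u ++ v ∈ L → u ∈ L ∧ v ∈ L)
    (hext : ∀ w ∈ L, ∃ x y : A, ([x] ++ w ++ [y]) ∈ L)
    (hne : ∀ n : ℕ, ∃ w ∈ L, w.length = n)
    (a : A) (m M : ℕ → ℕ)
    (hm_le : ∀ n, ∀ w ∈ L, w.length = n → m n ≤ w.count a)
    (hm_att : ∀ n, ∃ w ∈ L, w.length = n ∧ w.count a = m n)
    (hM_ge : ∀ n, ∀ w ∈ L, w.length = n → w.count a ≤ M n)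
    (hM_att : ∀ n, ∃ w ∈ L, w.length = n ∧ w.count a = M n)
    (C : ℝ) (hC : ∀ n : ℕ, (M n : ℝ) - (m n : ℝ) < C) :
    ∃ f : ℝ, ∀ n : ℕ,
      (n : ℝ) * f - C ≤ (m n : ℝ) ∧ (m n : ℝ) ≤ (M n : ℝ) ∧ (M n : ℝ) ≤ (n : ℝ) * f + C := by
  have hmM : ∀ n, m n ≤ M n := by
    intro n
    obtain ⟨w, hw, hl, hc⟩ := hm_att n
    exact hc ▸ hM_ge n w hw hl
  have hm0 : m 0 = 0 := by
    obtain ⟨w, hw, hl, hc⟩ := hm_att 0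
    have : w = [] := List.length_eq_zero_iff.mp hl
    subst this; simpa using hc.symm
  have hM0 : M 0 = 0 := by
    obtain ⟨w, hw, hl, hc⟩ := hM_att 0
    have : w = [] := List.length_eq_zero_iff.mp hl
    subst this; simpa using hc.symm
  have hCpos : 0 < C := by
    have := hC 0
    rw [hm0, hM0] at this
    simpa using this
  have hsuper : ∀ p q, m p + m q ≤ m (p + q) := by
    intro p q
    obtain ⟨w, hw, hl, hc⟩ := hm_att (p + q)
    have hsplit : w.take p ++ w.drop p = w := List.take_append_drop p w
    have hmem := hfac _ _ (hsplit ▸ hw)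
    have h1 : (w.take p).length = p := by simp [hl]
    have h2 : (w.drop p).length = q := by simp [hl]
    have e1 := hm_le p _ hmem.1 h1
    have e2 := hm_le q _ hmem.2 h2
    have hcount : (w.take p).count a + (w.drop p).count a = m (p + q) := by
      rw [← hc, ← List.count_append, hsplit]
    omega
  have hsub : ∀ p q, M (p + q) ≤ M p + M q := by
    intro p q
    obtain ⟨w, hw, hl, hc⟩ := hM_att (p + q)
    have hsplit : w.take p ++ w.drop p = w := List.take_append_drop p w
    have hmem := hfac _ _ (hsplit ▸ hw)
    have h1 : (w.take p).length = p := by simp [hl]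
    have h2 : (w.drop p).length = q := by simp [hl]
    have e1 := hM_ge p _ hmem.1 h1
    have e2 := hM_ge q _ hmem.2 h2
    have hcount : (w.take p).count a + (w.drop p).count a = M (p + q) := by
      rw [← hc, ← List.count_append, hsplit]
    omega
  have hmiter : ∀ n k, n * m k ≤ m (n * k) := by
    intro n k
    induction n with
    | zero => simp [hm0]
    | succ n ih =>
      have h := hsuper (n * k) k
      have : (n + 1) * k = n * k + k := by ring
      rw [this]
      have : (n + 1) * m k = n * m k + m k := by ring
      omega
  have hMiter : ∀ n k, M (n * k) ≤ n * M k := by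
    intro n k
    induction n with
    | zero => simp [hM0]
    | succ n ih =>
      have h := hsub (n * k) k
      have e : (n + 1) * k = n * k + k := by ring
      rw [e]
      have : (n + 1) * M k = n * M k + M k := by ring
      omega
  have key : ∀ n k : ℕ, n * m k ≤ k * M n := by
    intro n k
    calc n * m k ≤ m (n * k) := hmiter n k
      _ ≤ M (n * k) := hmM _
      _ = M (k * n) := by rw [Nat.mul_comm]
      _ ≤ k * M n := hMiter k n
  -- real version
  have keyR : ∀ n k : ℕ, ((m (k + 1) : ℝ)) / (k + 1) ≤ ((M (n + 1) : ℝ)) / (n + 1) := by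
    intro n k
    rw [div_le_div_iff₀ (by positivity) (by positivity)]
    have := key (n + 1) (k + 1)
    have : ((n : ℝ) + 1) * (m (k + 1) : ℝ) ≤ ((k : ℝ) + 1) * (M (n + 1) : ℝ) := by
      exact_mod_cast this
    linarith
  set S : Set ℝ := Set.range (fun k : ℕ => (m (k + 1) : ℝ) / (k + 1)) with hS
  have hSne : S.Nonempty := ⟨_, ⟨0, rfl⟩⟩
  have hbdd : BddAbove S := by
    refine ⟨(M 1 : ℝ) / 1, ?_⟩
    rintro x ⟨k, rfl⟩
    simpa using keyR 0 k
  refine ⟨sSup S, fun n => ?_⟩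
  refine ⟨?_, by exact_mod_cast hmM n, ?_⟩
  · -- n * f - C ≤ m n
    rcases Nat.eq_zero_or_pos n with h | h
    · subst h; simp [hm0]; linarith
    · obtain ⟨n', rfl⟩ : ∃ n', n = n' + 1 := ⟨n - 1, by omega⟩
      have hub : sSup S ≤ (M (n' + 1) : ℝ) / (n' + 1) :=
        csSup_le hSne (by rintro x ⟨k, rfl⟩; exact keyR n' k)
      have hnpos : (0 : ℝ) < (n' : ℝ) + 1 := by positivity
      have h1 : ((n' : ℝ) + 1) * sSup S ≤ (M (n' + 1) : ℝ) := by
        rw [mul_comm]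
        exact (le_div_iff₀ hnpos).mp hub
      have h2 := hC (n' + 1)
      push_cast
      push_cast at h1 h2
      linarith
  · -- M n ≤ n * f + C
    rcases Nat.eq_zero_or_pos n with h | h
    · subst h; simp [hM0]; linarith
    · obtain ⟨n', rfl⟩ : ∃ n', n = n' + 1 := ⟨n - 1, by omega⟩
      have hlb : (m (n' + 1) : ℝ) / (n' + 1) ≤ sSup S :=
        le_csSup hbdd ⟨n', rfl⟩
      have hnpos : (0 : ℝ) < (n' : ℝ) + 1 := by positivity
      have h1 : (m (n' + 1) : ℝ) ≤ ((n' : ℝ) + 1) * sSup S := by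
        rw [mul_comm]
        exact (div_le_iff₀ hnpos).mp hlb
      have h2 := hC (n' + 1)
      push_cast
      push_cast at h1 h2
      linarith
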